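/- arXiv:1505.03125 — 2 statements merged into one kernel-verified Lean document; each statement's English description precedes it below -/
import Mathlib

section
/- Let M be a diagonal positive-definite n×n matrix and suppose Q_x = S + (1/2)E with S antisymmetric and E symmetric. For the semi-discrete ODE du/dt = -M⁻¹ Q u + σ M⁻¹ E₋ u, where E = E₊ + E₋ with E₊ positive semi-definite and E₋ negative semi-definite, the energy uᵀ M u satisfies d(uᵀMu)/dt = -uᵀE₊u + (2σ-1)uᵀE₋u, which is ≤ 0 whenever σ ≥ 1/2. -/
open Matrix

theorem sbp_sat_energy_estimate {n : ℕ}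
    (M Q S E Eplus Eminus : Matrix (Fin n) (Fin n) ℝ)
    (d : Fin n → ℝ) (hMd : M = Matrix.diagonal d) (hdpos : ∀ i, 0 < d i)
    (hS : Sᵀ = -S) (hE : Eᵀ = E)
    (hQ : Q = S + (1/2 : ℝ) • E)
    (hsplit : E = Eplus + Eminus)
    (hEplus : Eplus.PosSemidef) (hEminus : (-Eminus).PosSemidef)
    (σ : ℝ) (hσ : (1/2 : ℝ) ≤ σ)
    (u u' : ℝ → Fin n → ℝ)
    (hderiv : ∀ t i, HasDerivAt (fun s => u s i) (u' t i) t)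
    (hode : ∀ t, u' t = -((M⁻¹ * Q) *ᵥ u t) + σ • ((M⁻¹ * Eminus) *ᵥ u t)) :
    ∀ t : ℝ,
      HasDerivAt (fun s => u s ⬝ᵥ (M *ᵥ u s))
        (-(u t ⬝ᵥ (Eplus *ᵥ u t)) + (2 * σ - 1) * (u t ⬝ᵥ (Eminus *ᵥ u t))) t ∧
      -(u t ⬝ᵥ (Eplus *ᵥ u t)) + (2 * σ - 1) * (u t ⬝ᵥ (Eminus *ᵥ u t)) ≤ 0 := by
  have hMsymm : Mᵀ = M := by rw [hMd, Matrix.diagonal_transpose]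
  have hMinv : M * M⁻¹ = 1 := by
    apply Matrix.mul_nonsing_inv
    rw [hMd, Matrix.det_diagonal]
    exact isUnit_iff_ne_zero.2 (Finset.prod_ne_zero_iff.2 fun i _ => (hdpos i).ne')
  have hEm : Eminusᵀ = Eminus := by
    have := hEminus.1
    rw [Matrix.IsHermitian, Matrix.conjTranspose_neg, neg_eq_iff_eq_neg] at this
    simpa using congrArg Neg.neg this
  intro t
  set v := u t with hv
  set w := u' t with hw
  -- derivative of the quadratic form
  have hDer : HasDerivAt (fun s => u s ⬝ᵥ (M *ᵥ u s))
      (w ⬝ᵥ (M *ᵥ v) + v ⬝ᵥ (M *ᵥ w)) t := by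
    have h1 : ∀ i, HasDerivAt (fun s => (M *ᵥ u s) i) ((M *ᵥ w) i) t := by
      intro i
      simp only [Matrix.mulVec, dotProduct]
      exact HasDerivAt.fun_sum fun j _ => (hderiv t j).const_mul (M i j)
    have h2 : HasDerivAt (fun s => u s ⬝ᵥ (M *ᵥ u s))
        (∑ i, (w i * (M *ᵥ v) i + v i * (M *ᵥ w) i)) t := by
      simp only [dotProduct]
      exact HasDerivAt.fun_sum fun i _ => (hderiv t i).mul (h1 i)
    simpa [dotProduct, Finset.sum_add_distrib] using h2
  -- compute M *ᵥ w
  have hMw : M *ᵥ w = -(Q *ᵥ v) + σ • (Eminus *ᵥ v) := by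
    rw [hw, hode t, Matrix.mulVec_add, Matrix.mulVec_neg, Matrix.mulVec_smul,
      Matrix.mulVec_mulVec, Matrix.mulVec_mulVec, ← Matrix.mul_assoc, ← Matrix.mul_assoc,
      hMinv, Matrix.one_mul, Matrix.one_mul]
  -- the key algebraic identity
  have key : w ⬝ᵥ (M *ᵥ v) + v ⬝ᵥ (M *ᵥ w)
      = -(v ⬝ᵥ (Eplus *ᵥ v)) + (2 * σ - 1) * (v ⬝ᵥ (Eminus *ᵥ v)) := by
    have hwMv : w ⬝ᵥ (M *ᵥ v) = (M *ᵥ w) ⬝ᵥ v := by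
      rw [Matrix.dotProduct_mulVec, ← Matrix.mulVec_transpose, hMsymm]
    have hQt : v ⬝ᵥ (Q *ᵥ v) + (Q *ᵥ v) ⬝ᵥ v = v ⬝ᵥ (E *ᵥ v) := by
      have h3 : (Q *ᵥ v) ⬝ᵥ v = v ⬝ᵥ (Qᵀ *ᵥ v) := by
        rw [Matrix.dotProduct_mulVec, Matrix.vecMul_transpose]
      have h4 : Q + Qᵀ = E := by
        rw [hQ, Matrix.transpose_add, Matrix.transpose_smul, hS, hE]
        module
      rw [h3, ← dotProduct_add, ← Matrix.add_mulVec, h4]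
    have hEmv : (Eminus *ᵥ v) ⬝ᵥ v = v ⬝ᵥ (Eminus *ᵥ v) := by
      rw [dotProduct_comm, Matrix.dotProduct_mulVec, ← Matrix.mulVec_transpose, hEm,
        dotProduct_comm]
    have hEsplit : v ⬝ᵥ (E *ᵥ v) = v ⬝ᵥ (Eplus *ᵥ v) + v ⬝ᵥ (Eminus *ᵥ v) := by
      rw [hsplit, Matrix.add_mulVec, dotProduct_add]
    rw [hwMv, hMw]
    simp only [dotProduct_add, add_dotProduct, dotProduct_neg,
      neg_dotProduct, dotProduct_smul, smul_dotProduct, smul_eq_mul]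
    nlinarith [hQt, hEmv, hEsplit]
  constructor
  · rw [← key]; exact hDer
  · have h1 : 0 ≤ v ⬝ᵥ (Eplus *ᵥ v) := by
      have := hEplus.dotProduct_mulVec_nonneg v
      simpa using this
    have h2 : v ⬝ᵥ (Eminus *ᵥ v) ≤ 0 := by
      have := hEminus.dotProduct_mulVec_nonneg v
      simp only [Matrix.neg_mulVec, dotProduct_neg, star_trivial] at this
      linarith
    nlinarith
end

section
/- If u solves du/dt = A u where M is symmetric positive-definite and M A + AᵀM = -P + (2σ-1)N with P positive semi-definite, N negative semi-definite, and σ ≥ 1/2, then t ↦ u(t)ᵀ M u(t) is non-increasing. -/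
open Matrix

theorem abstract_time_stability {n : ℕ}
    (A M P N : Matrix (Fin n) (Fin n) ℝ)
    (hM : M.PosDef)
    (hP : P.PosSemidef) (hN : (-N).PosSemidef)
    (σ : ℝ) (hσ : (1/2 : ℝ) ≤ σ)
    (hcomp : M * A + Aᵀ * M = -P + (2 * σ - 1) • N)
    (u : ℝ → Fin n → ℝ)
    (hderiv : ∀ t i, HasDerivAt (fun s => u s i) ((A *ᵥ u t) i) t) :
    Antitone (fun t => u t ⬝ᵥ (M *ᵥ u t)) := by
  have key : ∀ t, HasDerivAt (fun s => u s ⬝ᵥ (M *ᵥ u s))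
      ((A *ᵥ u t) ⬝ᵥ (M *ᵥ u t) + u t ⬝ᵥ (M *ᵥ (A *ᵥ u t))) t := by
    intro t
    have h : HasDerivAt (fun s => ∑ i, u s i * ∑ j, M i j * u s j)
        (∑ i, ((A *ᵥ u t) i * ∑ j, M i j * u t j
          + u t i * ∑ j, M i j * (A *ᵥ u t) j)) t := by
      apply HasDerivAt.fun_sum
      intro i _
      exact (hderiv t i).mul (HasDerivAt.fun_sum fun j _ => (hderiv t j).const_mul (M i j))
    have e1 : (fun s => u s ⬝ᵥ (M *ᵥ u s))
        = fun s => ∑ i, u s i * ∑ j, M i j * u s j := by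
      funext s; simp [dotProduct, mulVec]
    rw [e1]
    convert h using 1
    simp [dotProduct, mulVec, Finset.sum_add_distrib]
  apply antitone_of_deriv_nonpos
  · intro t; exact (key t).differentiableAt
  · intro t
    rw [(key t).deriv]
    set v := u t with hv
    have hrw : (A *ᵥ v) ⬝ᵥ (M *ᵥ v) + v ⬝ᵥ (M *ᵥ (A *ᵥ v))
        = v ⬝ᵥ ((M * A + Aᵀ * M) *ᵥ v) := by
      rw [add_mulVec, dotProduct_add, ← mulVec_mulVec, ← mulVec_mulVec,
        ← vecMul_transpose, ← dotProduct_mulVec, add_comm]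
    rw [hrw, hcomp, add_mulVec, dotProduct_add, neg_mulVec, dotProduct_neg,
      smul_mulVec, dotProduct_smul]
    have h1 : 0 ≤ v ⬝ᵥ (P *ᵥ v) := by simpa using hP.dotProduct_mulVec_nonneg v
    have h2 : v ⬝ᵥ (N *ᵥ v) ≤ 0 := by
      have := hN.dotProduct_mulVec_nonneg v
      simp only [neg_mulVec, dotProduct_neg, star_trivial] at this
      linarith
    have h3 : 0 ≤ 2 * σ - 1 := by linarith
    have := mul_nonpos_of_nonneg_of_nonpos h3 h2
    simp only [smul_eq_mul]
    linarith
end
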